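/- Let S be a finite system of m linear equations over ZMod 2 in unknowns x₁, …, xₙ, the i-th equation reading ∑_{j ∈ sᵢ} xⱼ = cᵢ for a finite set sᵢ ⊆ {1, …, n} and cᵢ ∈ ZMod 2. Over the variable set V = {x₁, …, xₙ} ⊎ {q}, let φᵢ be the formula with φᵢ σ = true iff ∑_{j ∈ sᵢ} σ(xⱼ) = cᵢ in ZMod 2 (Booleans read as elements of ZMod 2), and define Γ' := { σ ↦ xor (φᵢ σ) (σ q) : i with φᵢ(all-true) = false } ∪ { φᵢ : i with φᵢ(all-true) = true }. Then the all-true assignment satisfies Γ', and S has no solution in (ZMod 2)ⁿ if and only if (Γ', ∅, q) has an explanation (equivalently, if and only if Γ' ⊨ q). -/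

import Mathlib

/-- `σ` satisfies the knowledge base `Γ` (a set of formulas, each a Boolean function
on assignments). -/
def SatKB {V : Type*} (Γ : Set ((V → Bool) → Bool)) (σ : V → Bool) : Prop :=
  ∀ γ ∈ Γ, γ σ = true

/-- `σ` satisfies the set of literals given by positive part `P` and negative part `N`. -/
def SatLits {V : Type*} (σ : V → Bool) (P N : Set V) : Prop :=
  (∀ x ∈ P, σ x = true) ∧ (∀ x ∈ N, σ x = false)

/-- `(P, N)` is an explanation for the abduction instance `(Γ, A, φ)`. -/
def IsExplanation {V : Type*} (Γ : Set ((V → Bool) → Bool)) (A : Set V)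
    (φ : (V → Bool) → Bool) (P N : Set V) : Prop :=
  P ⊆ A ∧ N ⊆ A ∧ Disjoint P N ∧
    (∃ σ, SatKB Γ σ ∧ SatLits σ P N) ∧
    (∀ σ, SatKB Γ σ → SatLits σ P N → φ σ = true)

/-- Reduction from inconsistency of a system of linear equations over `ZMod 2` to the
abduction problem with affine knowledge base. -/
theorem stmt_5 (n m : ℕ) (s : Fin m → Finset (Fin n)) (c : Fin m → ZMod 2) :
    let φ : Fin m → (Option (Fin n) → Bool) → Bool := fun i σ =>
      decide ((∑ j ∈ s i, if σ (some j) = true then (1 : ZMod 2) else 0) = c i)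
    let Γ' : Set ((Option (Fin n) → Bool) → Bool) :=
      ((fun i : Fin m => fun σ : Option (Fin n) → Bool => xor (φ i σ) (σ none)) ''
          {i | φ i (fun _ => true) = false}) ∪
        (φ '' {i | φ i (fun _ => true) = true})
    SatKB Γ' (fun _ => true) ∧
    ((¬ ∃ a : Fin n → ZMod 2, ∀ i : Fin m, ∑ j ∈ s i, a j = c i) ↔
        ∃ P N : Set (Option (Fin n)),
          IsExplanation Γ' ∅ (fun σ => σ none) P N) ∧
    ((¬ ∃ a : Fin n → ZMod 2, ∀ i : Fin m, ∑ j ∈ s i, a j = c i) ↔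
        ∀ σ, SatKB Γ' σ → σ none = true) := by
  intro φ Γ'
  have hsatT : SatKB Γ' (fun _ => true) := by
    rintro γ (⟨i, hi, rfl⟩ | ⟨i, hi, rfl⟩)
    · simp only [Set.mem_setOf_eq] at hi
      simp [hi]
    · exact hi
  have key : (¬ ∃ a : Fin n → ZMod 2, ∀ i : Fin m, ∑ j ∈ s i, a j = c i) ↔
      (∀ σ, SatKB Γ' σ → σ none = true) := by
    constructor
    · intro h σ hσ
      by_contra hq
      simp only [Bool.not_eq_true] at hq
      apply h
      refine ⟨fun j => if σ (some j) = true then 1 else 0, fun i => ?_⟩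
      have hφ : φ i σ = true := by
        by_cases hi : φ i (fun _ => true) = true
        · exact hσ (φ i) (Or.inr ⟨i, hi, rfl⟩)
        · have := hσ _ (Or.inl ⟨i, by simpa using hi, rfl⟩)
          simpa [hq] using this
      simpa [φ] using hφ
    · rintro h ⟨a, ha⟩
      have h2 : ∀ x : ZMod 2, (if decide (x = 1) = true then (1 : ZMod 2) else 0) = x := by
        decide
      set σ : Option (Fin n) → Bool :=
        fun o => o.elim false (fun j => decide (a j = 1)) with hσdef
      have hφ : ∀ i, φ i σ = true := by
        intro i
        have hsum : (∑ j ∈ s i, if σ (some j) = true then (1 : ZMod 2) else 0) = c i := by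
          rw [Finset.sum_congr rfl (fun j _ => ?_), ha i]
          exact h2 (a j)
        exact decide_eq_true hsum
      have hsat : SatKB Γ' σ := by
        rintro γ (⟨i, hi, rfl⟩ | ⟨i, hi, rfl⟩)
        · show xor (φ i σ) (σ none) = true; rw [hφ i]; rfl
        · exact hφ i
      have := h σ hsat
      simp [hσdef] at this
  refine ⟨hsatT, ?_, key⟩
  rw [key]
  constructor
  · intro h
    exact ⟨∅, ∅, le_refl _, le_refl _, disjoint_bot_left,
      ⟨fun _ => true, hsatT, by simp [SatLits]⟩,
      fun σ hσ _ => h σ hσ⟩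
  · rintro ⟨P, N, hP, hN, _, _, himp⟩ σ hσ
    have hPe : P = ∅ := Set.subset_empty_iff.mp hP
    have hNe : N = ∅ := Set.subset_empty_iff.mp hN
    exact himp σ hσ (by simp [SatLits, hPe, hNe])
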